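/- arXiv:1104.1066 — 4 statements merged into one kernel-verified Lean document; each statement's English description precedes it below -/
import Mathlib

section
/- Let G be a finite group in which every Schmidt subgroup is a Hall subgroup of G, and let p and q be distinct primes dividing |G|. Then every Hall {p,q}-subgroup of G is either nilpotent or a Schmidt group. -/
/-- A Schmidt group: a finite non-nilpotent group all of whose proper subgroups are nilpotent. -/
def IsSchmidtGroup (G : Type*) [Group G] : Prop :=
  Finite G ∧ ¬ Group.IsNilpotent G ∧ ∀ H : Subgroup G, H ≠ ⊤ → Group.IsNilpotent H

/-- A Hall subgroup: its order is coprime to its index. -/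
def IsHallSubgroup {G : Type*} [Group G] (H : Subgroup G) : Prop :=
  Nat.Coprime (Nat.card H) H.index

/-- The property that every Schmidt subgroup is a Hall subgroup. -/
def EverySchmidtIsHall (G : Type*) [Group G] : Prop :=
  ∀ S : Subgroup G, IsSchmidtGroup S → IsHallSubgroup S

/-- Every non-nilpotent subgroup of a finite group contains a Schmidt subgroup. -/
lemma exists_schmidt_le {G : Type*} [Group G] [Finite G] (H : Subgroup G)
    (h : ¬ Group.IsNilpotent ↥H) : ∃ S : Subgroup G, S ≤ H ∧ IsSchmidtGroup ↥S := by
  have key : ∀ n : ℕ, ∀ H : Subgroup G, Nat.card ↥H = n → ¬ Group.IsNilpotent ↥H →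
      ∃ S : Subgroup G, S ≤ H ∧ IsSchmidtGroup ↥S := by
    intro n
    induction n using Nat.strong_induction_on with
    | _ n ih =>
    intro H hn h
    subst hn
    by_cases hall : ∀ H₀ : Subgroup ↥H, H₀ ≠ ⊤ → Group.IsNilpotent ↥H₀
    · exact ⟨H, le_refl H, inferInstance, h, hall⟩
    · push_neg at hall
      obtain ⟨H₀, hne, hnn⟩ := hall
      set S₁ := H₀.map H.subtype with hS₁
      have hle : S₁ ≤ H := Subgroup.map_subtype_le H₀
      have e : ↥H₀ ≃* ↥S₁ := Subgroup.equivMapOfInjective H₀ H.subtype H.subtype_injective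
      have hnn' : ¬ Group.IsNilpotent ↥S₁ := fun h' => hnn ((Group.isNilpotent_congr e).mpr h')
      have hcard : Nat.card ↥S₁ < Nat.card ↥H := by
        have h1 : Nat.card ↥S₁ = Nat.card ↥H₀ := (Nat.card_congr e.toEquiv).symm
        have h2 : Nat.card ↥H₀ ∣ Nat.card ↥H := Subgroup.card_subgroup_dvd_card H₀
        have h3 : Nat.card ↥H₀ ≠ Nat.card ↥H := fun hE => hne (Subgroup.eq_top_of_card_eq H₀ hE)
        rw [h1]
        exact lt_of_le_of_ne (Nat.le_of_dvd Nat.card_pos h2) h3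
      obtain ⟨S, hSle, hS⟩ := ih _ hcard S₁ rfl hnn'
      exact ⟨S, hSle.trans hle, hS⟩
  exact key _ H rfl h

/-- Lemma 6: every Hall `{p,q}`-subgroup of a group in which every Schmidt subgroup is Hall
is either nilpotent or a Schmidt group. -/
theorem stmt_12 {G : Type*} [Group G] [Finite G] (hHall : EverySchmidtIsHall G)
    (p q : ℕ) (hp : p.Prime) (hq : q.Prime) (hpq : p ≠ q)
    (hpd : p ∣ Nat.card G) (hqd : q ∣ Nat.card G) (K : Subgroup G)
    (hKord : ∀ r : ℕ, r.Prime → r ∣ Nat.card K → r = p ∨ r = q)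
    (hKind : Nat.Coprime K.index (p * q)) :
    Group.IsNilpotent ↥K ∨ IsSchmidtGroup ↥K := by
  by_cases hnil : Group.IsNilpotent ↥K
  · exact Or.inl hnil
  right
  refine ⟨inferInstance, hnil, fun H hH => ?_⟩
  by_contra hHnn
  set H' := H.map K.subtype with hH'
  have hH'le : H' ≤ K := Subgroup.map_subtype_le H
  have eH : ↥H ≃* ↥H' := Subgroup.equivMapOfInjective H K.subtype K.subtype_injective
  have hH'nn : ¬ Group.IsNilpotent ↥H' := fun h => hHnn ((Group.isNilpotent_congr eH).mpr h)
  obtain ⟨S, hSle, hS⟩ := exists_schmidt_le H' hH'nn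
  have hcop : Nat.Coprime (Nat.card S) S.index := hHall S hS
  -- basic positivity
  have hnS0 : Nat.card S ≠ 0 := Nat.card_pos.ne'
  have hnK0 : Nat.card K ≠ 0 := Nat.card_pos.ne'
  -- divisibility chain
  have hSH' : Nat.card S ∣ Nat.card H' := Subgroup.card_dvd_of_le hSle
  have hH'K : Nat.card H' ∣ Nat.card K := Subgroup.card_dvd_of_le hH'le
  have hSK : Nat.card S ∣ Nat.card K := hSH'.trans hH'K
  -- every prime dividing |S| is p or q
  have hSord : ∀ r : ℕ, r.Prime → r ∣ Nat.card S → r = p ∨ r = q := fun r hr hd =>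
    hKord r hr (hd.trans hSK)
  -- both p and q divide |S|, since S is not nilpotent hence not an r-group
  have hpS : p ∣ Nat.card S := by
    by_contra hpS
    have hall : ∀ {d : ℕ}, d.Prime → d ∣ Nat.card S → d = q := by
      intro d hd hdd
      rcases hSord d hd hdd with h | h
      · exact absurd (h ▸ hdd) hpS
      · exact h
    have hcardpow := Nat.eq_prime_pow_of_unique_prime_dvd hnS0 hall
    haveI : Fact q.Prime := ⟨hq⟩
    haveI : Finite ↥S := hS.1
    exact hS.2.1 (IsPGroup.of_card hcardpow).isNilpotent
  have hqS : q ∣ Nat.card S := by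
    by_contra hqS
    have hall : ∀ {d : ℕ}, d.Prime → d ∣ Nat.card S → d = p := by
      intro d hd hdd
      rcases hSord d hd hdd with h | h
      · exact h
      · exact absurd (h ▸ hdd) hqS
    have hcardpow := Nat.eq_prime_pow_of_unique_prime_dvd hnS0 hall
    haveI : Fact p.Prime := ⟨hp⟩
    haveI : Finite ↥S := hS.1
    exact hS.2.1 (IsPGroup.of_card hcardpow).isNilpotent
  -- full p- and q-parts of |G| divide |S|
  have hmul : Nat.card S * S.index = Nat.card G := S.card_mul_index
  have hppart : p ^ (Nat.card G).factorization p ∣ Nat.card S := by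
    have hcp : Nat.Coprime p S.index := Nat.Coprime.coprime_dvd_left hpS hcop
    have hcpk : Nat.Coprime (p ^ (Nat.card G).factorization p) S.index := hcp.pow_left _
    exact hcpk.dvd_of_dvd_mul_right (hmul ▸ Nat.ordProj_dvd (Nat.card G) p)
  have hqpart : q ^ (Nat.card G).factorization q ∣ Nat.card S := by
    have hcq : Nat.Coprime q S.index := Nat.Coprime.coprime_dvd_left hqS hcop
    have hcqk : Nat.Coprime (q ^ (Nat.card G).factorization q) S.index := hcq.pow_left _
    exact hcqk.dvd_of_dvd_mul_right (hmul ▸ Nat.ordProj_dvd (Nat.card G) q)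
  -- |K| divides |S|
  have hKdvdS : Nat.card K ∣ Nat.card S := by
    rw [← Nat.factorization_le_iff_dvd hnK0 hnS0]
    intro r
    by_cases hr : r.Prime
    · by_cases hrd : r ∣ Nat.card K
      · have hKG : (Nat.card K).factorization r ≤ (Nat.card G).factorization r := by
          have := (Nat.factorization_le_iff_dvd hnK0 Nat.card_pos.ne').mpr
            (Subgroup.card_subgroup_dvd_card K)
          exact this r
        rcases hKord r hr hrd with h | h
        · subst h
          exact hKG.trans ((Nat.Prime.pow_dvd_iff_le_factorization hr hnS0).mp hppart)
        · subst h
          exact hKG.trans ((Nat.Prime.pow_dvd_iff_le_factorization hr hnS0).mp hqpart)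
      · simp [Nat.factorization_eq_zero_of_not_dvd hrd]
    · simp [Nat.factorization_eq_zero_of_not_prime _ hr]
  -- conclude |H'| = |K|, so H = ⊤, contradiction
  have hH'eq : Nat.card H' = Nat.card K :=
    Nat.dvd_antisymm hH'K (hKdvdS.trans hSH')
  have hHeq : Nat.card ↥H = Nat.card ↥K := by
    rw [Nat.card_congr eH.toEquiv, hH'eq]
  exact hH (Subgroup.eq_top_of_card_eq H hHeq)
end

section
/- Let n ≥ 2 be an integer, p a prime, and let π be the set of primes q such that q divides p^n − 1 but q does not divide p^m − 1 for any integer m with 1 ≤ m < n. Then the general linear group GL(n, p) over the field with p elements has a cyclic Hall π-subgroup, i.e., a cyclic subgroup T such that every prime divisor of |T| lies in π and the index of T in GL(n,p) is divisible by no prime of π. -/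
private lemma zpowers_cyclic {G} [Group G] (y : G) : IsCyclic ↥(Subgroup.zpowers y) := by
  refine ⟨⟨⟨y, Subgroup.mem_zpowers y⟩, ?_⟩⟩
  rintro ⟨x, k, rfl⟩
  exact ⟨k, Subtype.ext (by simp)⟩

/-- Lemma 7: for `n ≥ 2`, `GL(n, p)` has a cyclic Hall `π`-subgroup, where `π` is the set of
primes dividing `p^n - 1` but no `p^m - 1` with `1 ≤ m < n`. -/
theorem stmt_13 (n p : ℕ) (hn : 2 ≤ n) (hp : p.Prime) :
    ∃ T : Subgroup (GL (Fin n) (ZMod p)), IsCyclic ↥T ∧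
      (∀ r : ℕ, r.Prime → r ∣ Nat.card T →
        r ∣ p ^ n - 1 ∧ ∀ m : ℕ, 1 ≤ m → m < n → ¬ r ∣ p ^ m - 1) ∧
      (∀ r : ℕ, r.Prime → r ∣ p ^ n - 1 → (∀ m : ℕ, 1 ≤ m → m < n → ¬ r ∣ p ^ m - 1) →
        ¬ r ∣ T.index) := by
  classical
  haveI : Fact p.Prime := ⟨hp⟩
  have hn0 : n ≠ 0 := by omega
  have hp2 : 2 ≤ p := hp.two_le
  have hpn4 : 4 ≤ p ^ n := by
    calc (4 : ℕ) = 2 ^ 2 := by norm_num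
    _ ≤ p ^ 2 := Nat.pow_le_pow_left hp2 2
    _ ≤ p ^ n := Nat.pow_le_pow_right (by omega) hn
  set N : ℕ := p ^ n - 1 with hNdef
  have hN0 : N ≠ 0 := by omega
  -- the set of π-primes among the prime factors of N
  set S : Finset ℕ := N.primeFactors.filter
    (fun q => ∀ m : ℕ, 1 ≤ m → m < n → ¬ q ∣ p ^ m - 1) with hSdef
  set d : ℕ := ∏ q ∈ S, q ^ N.factorization q with hddef
  have hdN : d ∣ N := by
    have h1 : d ∣ ∏ q ∈ N.primeFactors, q ^ N.factorization q :=
      Finset.prod_dvd_prod_of_subset _ _ _ (Finset.filter_subset _ _)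
    rwa [← Nat.support_factorization, ← Finsupp.prod, Nat.factorization_prod_pow_eq_self hN0] at h1
  have hd0 : d ≠ 0 := by
    have := Nat.pos_of_ne_zero hN0
    exact fun h => hN0 (Nat.eq_zero_of_zero_dvd (h ▸ hdN))
  -- Singer cycle: embed (GaloisField p n)ˣ into GL n (ZMod p)
  set K := GaloisField p n with hK
  have hcardK : Nat.card Kˣ = N := by
    rw [Nat.card_units, GaloisField.card p n hn0]
  obtain ⟨g, hg⟩ := IsCyclic.exists_ofOrder_eq_natCard (α := Kˣ)
  rw [hcardK] at hg
  set x : Kˣ := g ^ (N / d) with hx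
  have hNd : N / d ∣ N := Nat.div_dvd_of_dvd hdN
  have hordx : orderOf x = d := by
    rw [hx, orderOf_pow, hg, Nat.gcd_eq_right hNd, Nat.div_div_self hdN hN0]
  -- the embedding
  haveI : Nonempty (Fin n) := ⟨⟨0, by omega⟩⟩
  let b : Module.Basis (Fin n) (ZMod p) K := Module.finBasisOfFinrankEq _ _ (GaloisField.finrank p hn0)
  let f : K →+* Matrix (Fin n) (Fin n) (ZMod p) :=
    ((algEquivMatrix b).toAlgHom.comp (Algebra.lmul (ZMod p) K)).toRingHom
  have hfinj : Function.Injective f := f.injective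
  let φ : Kˣ →* GL (Fin n) (ZMod p) := Units.map f.toMonoidHom
  have hφinj : Function.Injective φ := Units.map_injective hfinj
  set y : GL (Fin n) (ZMod p) := φ x with hy
  have hordy : orderOf y = d := by rw [hy, orderOf_injective φ hφinj, hordx]
  refine ⟨Subgroup.zpowers y, zpowers_cyclic y, ?_, ?_⟩
  · -- every prime of |T| is a π-prime
    intro r hr hrd
    rw [Nat.card_zpowers, hordy] at hrd
    obtain ⟨q, hqS, hrq⟩ := hr.prime.exists_mem_finset_dvd hrd
    rw [hSdef, Finset.mem_filter] at hqS
    obtain ⟨hqN, hqπ⟩ := hqS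
    have hq : q.Prime := Nat.prime_of_mem_primeFactors hqN
    have : r = q := (Nat.prime_dvd_prime_iff_eq hr hq).mp (hr.dvd_of_dvd_pow hrq)
    subst this
    exact ⟨Nat.dvd_of_mem_primeFactors hqN, hqπ⟩
  · -- no π-prime divides the index
    intro r hr hrN hrπ
    set v : ℕ := N.factorization r with hv
    -- r^v divides d
    have hrS : r ∣ N → r ∈ S := fun h => by
      rw [hSdef, Finset.mem_filter]
      exact ⟨Nat.mem_primeFactors.mpr ⟨hr, h, hN0⟩, hrπ⟩
    have hrvd : r ^ v ∣ d := Finset.dvd_prod_of_mem _ (hrS hrN)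
    have hdvr : d.factorization r = v := by
      refine le_antisymm ?_ ?_
      · exact (Nat.factorization_le_iff_dvd hd0 hN0).mpr hdN r
      · exact (Nat.Prime.pow_dvd_iff_le_factorization hr hd0).mp hrvd
    -- r does not divide p
    have hrp : ¬ r ∣ p := by
      intro h
      have h1 : r ∣ p ^ n := h.trans (dvd_pow_self p hn0)
      have : r ∣ p ^ n - N := Nat.dvd_sub h1 hrN
      rw [hNdef, Nat.sub_sub_self (by omega)] at this
      have h2 := Nat.le_of_dvd one_pos this
      have := hr.two_le
      omega
    -- cardinality of GL
    have hGL : Nat.card (GL (Fin n) (ZMod p)) = ∏ i : Fin n, (p ^ n - p ^ (i : ℕ)) := by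
      have := Matrix.card_GL_field (𝔽 := ZMod p) (n := n)
      rwa [ZMod.card] at this
    set M : ℕ := ∏ i ∈ Finset.Ico 1 n, (p ^ n - p ^ i) with hM
    have hGL2 : Nat.card (GL (Fin n) (ZMod p)) = N * M := by
      have e : ∏ i : Fin n, (p ^ n - p ^ (i : ℕ)) = ∏ i ∈ Finset.range n, (p ^ n - p ^ i) :=
        Fin.prod_univ_eq_prod_range (fun j => p ^ n - p ^ j) n
      rw [hGL, e, Finset.range_eq_Ico,
        Finset.prod_eq_prod_Ico_succ_bot (by omega : 0 < n)]
      simp [hM, hNdef]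
    have hM0 : M ≠ 0 := by
      rw [hM]
      refine Finset.prod_ne_zero_iff.mpr fun i hi => ?_
      rw [Finset.mem_Ico] at hi
      have : p ^ i < p ^ n := Nat.pow_lt_pow_right (by omega) (by omega)
      omega
    have hrM : ¬ r ∣ M := by
      intro h
      obtain ⟨i, hi, hri⟩ := hr.prime.exists_mem_finset_dvd h
      rw [Finset.mem_Ico] at hi
      have hfac : p ^ n - p ^ i = p ^ i * (p ^ (n - i) - 1) := by
        rw [Nat.mul_sub, mul_one, ← pow_add]
        congr 2
        omega
      rw [hfac] at hri
      rcases hr.prime.dvd_mul.mp hri with h' | h'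
      · exact hrp (hr.dvd_of_dvd_pow h')
      · exact hrπ (n - i) (by omega) (by omega) h'
    -- conclude via factorizations
    have hindex0 : (Subgroup.zpowers y).index ≠ 0 :=
      Subgroup.index_ne_zero_of_finite
    have hkey : d * (Subgroup.zpowers y).index = N * M := by
      rw [← hGL2, ← Subgroup.card_mul_index (Subgroup.zpowers y), Nat.card_zpowers, hordy]
    intro hrI
    have h1 : (d * (Subgroup.zpowers y).index).factorization r
        = v + (Subgroup.zpowers y).index.factorization r := by
      rw [Nat.factorization_mul hd0 hindex0]; simp [hdvr]
    have h2 : (N * M).factorization r = v := by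
      rw [Nat.factorization_mul hN0 hM0]
      simp [Nat.factorization_eq_zero_of_not_dvd hrM, hv]
    have h3 : (Subgroup.zpowers y).index.factorization r = 0 := by
      rw [hkey] at h1; omega
    exact absurd h3 (by
      have := (Nat.Prime.dvd_iff_one_le_factorization hr hindex0).mp hrI
      omega)
end

section
/- For every integer n ≥ 3 there exists a finite non-nilpotent group G in which every Schmidt subgroup is a Hall subgroup of G and whose derived length is exactly n. In particular, the derived length of finite non-nilpotent groups all of whose Schmidt subgroups are Hall subgroups is not bounded above. -/
namespace SchmidtHall

open scoped commutatorElement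

variable {m : ℕ}

abbrev Mat (m : ℕ) := Matrix (Fin m) (Fin m) (ZMod 5)

/-- entries with column index `< row + d` vanish. -/
def Gap (d : ℕ) (A : Mat m) : Prop := ∀ i j : Fin m, (j : ℕ) < (i : ℕ) + d → A i j = 0

lemma Gap.mono {a b : ℕ} (h : a ≤ b) {A : Mat m} (hA : Gap b A) : Gap a A :=
  fun i j hij => hA i j (lt_of_lt_of_le hij (by omega))

lemma gap_zero (d : ℕ) : Gap d (0 : Mat m) := fun _ _ _ => rfl

lemma Gap.add {d : ℕ} {A B : Mat m} (hA : Gap d A) (hB : Gap d B) : Gap d (A + B) :=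
  fun i j h => by simp [Matrix.add_apply, hA i j h, hB i j h]

lemma Gap.neg {d : ℕ} {A : Mat m} (hA : Gap d A) : Gap d (-A) :=
  fun i j h => by simp [Matrix.neg_apply, hA i j h]

lemma Gap.mul {a b : ℕ} {A B : Mat m} (hA : Gap a A) (hB : Gap b B) :
    Gap (a + b) (A * B) := by
  intro i j h
  rw [Matrix.mul_apply]
  apply Finset.sum_eq_zero
  intro k _
  by_cases hk : (k : ℕ) < (i : ℕ) + a
  · rw [hA i k hk, zero_mul]
  · rw [hB k j (by omega), mul_zero]

lemma Gap.sum {d : ℕ} {s : Finset ℕ} {f : ℕ → Mat m} (h : ∀ k ∈ s, Gap d (f k)) :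
    Gap d (∑ k ∈ s, f k) := by
  classical
  induction s using Finset.induction with
  | empty => simpa using gap_zero d
  | insert _ _ hx ih =>
      rw [Finset.sum_insert hx]
      exact (h _ (Finset.mem_insert_self _ _)).add
        (ih fun k hk => h k (Finset.mem_insert_of_mem hk))

lemma Gap.pow_succ {d : ℕ} {A : Mat m} (hA : Gap d A) (k : ℕ) : Gap d (A ^ (k + 1)) := by
  induction k with
  | zero => simpa using hA
  | succ k ih =>
      refine Gap.mono (show d ≤ d + d by omega) ?_
      have h2 : A ^ (k + 1 + 1) = A ^ (k + 1) * A := _root_.pow_succ A (k+1)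
      rw [h2]
      exact ih.mul hA

lemma Gap.eq_zero {A : Mat m} (hA : Gap m A) : A = 0 := by
  ext i j
  exact hA i j (by omega)

lemma Gap.pow_eq_zero {A : Mat m} {d : ℕ} (hd : 1 ≤ d) (hA : Gap d A) : A ^ m = 0 := by
  rcases Nat.eq_zero_or_pos m with hm | hm
  · subst hm; ext i; exact absurd i.2 (by omega)
  · obtain ⟨k, hk⟩ := Nat.exists_eq_add_of_lt hm  -- m = 0 + k + 1? careful
    -- m = k + 1
    have : A ^ m = A ^ ((m - 1) + 1) := by congr 1; omega
    rw [this]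
    have h1 : Gap 1 A := hA.mono hd
    -- show Gap m (A ^ (m-1+1)) : by induction: A^(j+1) has Gap (j+1)
    have key : ∀ j : ℕ, Gap (j + 1) (A ^ (j + 1)) := by
      intro j
      induction j with
      | zero => simpa using h1
      | succ j ih =>
          have h2 : A ^ (j + 1 + 1) = A ^ (j + 1) * A := _root_.pow_succ A (j+1)
          rw [h2]
          exact ih.mul h1
    exact (Gap.mono (le_refl m) (by simpa [Nat.sub_add_cancel hm] using key (m-1))).eq_zero


/-- The explicit inverse of a unipotent matrix. -/
lemma unip_inv {d : ℕ} (hd : 1 ≤ d) {X : Mat m} (hX : Gap d X) :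
    ∃ S : Mat m, (1 + X) * S = 1 ∧ S * (1 + X) = 1 ∧ Gap d (S - 1) := by
  rcases Nat.eq_zero_or_pos m with hm | hm
  · refine ⟨1, ?_, ?_, ?_⟩ <;>
      first
        | (ext i j; exact absurd i.2 (by omega))
        | (intro i j h; exact absurd i.2 (by omega))
  refine ⟨∑ k ∈ Finset.range m, (-X) ^ k, ?_, ?_, ?_⟩
  · have h := geom_sum_mul (-X) m
    have hXm : (-X) ^ m = 0 := Gap.pow_eq_zero hd hX.neg
    have : (1 + X) = -((-X) - 1) := by noncomm_ring
    rw [this]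
    have h2 : (∑ k ∈ Finset.range m, (-X) ^ k) * ((-X) - 1) = -1 := by
      rw [h, hXm, zero_sub]
    calc -((-X) - 1) * ∑ k ∈ Finset.range m, (-X) ^ k
        = -(((-X) - 1) * ∑ k ∈ Finset.range m, (-X) ^ k) := by noncomm_ring
      _ = 1 := by rw [mul_geom_sum (-X) m, hXm]; noncomm_ring
  · have h := geom_sum_mul (-X) m
    have hXm : (-X) ^ m = 0 := Gap.pow_eq_zero hd hX.neg
    have : (1 + X) = -((-X) - 1) := by noncomm_ring
    rw [this]
    calc (∑ k ∈ Finset.range m, (-X) ^ k) * -((-X) - 1)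
        = -((∑ k ∈ Finset.range m, (-X) ^ k) * ((-X) - 1)) := by noncomm_ring
      _ = 1 := by rw [h, hXm]; noncomm_ring
  · obtain ⟨m', rfl⟩ : ∃ m', m = m' + 1 := ⟨m - 1, by omega⟩
    have : (∑ k ∈ Finset.range (m' + 1), (-X) ^ k)
        = (∑ k ∈ Finset.range m', (-X) ^ (k + 1)) + (-X) ^ 0 :=
      Finset.sum_range_succ' (fun k => (-X) ^ k) m'
    rw [this]
    have h2 : (∑ k ∈ Finset.range m', (-X) ^ (k + 1)) + (-X) ^ 0 - 1
        = ∑ k ∈ Finset.range m', (-X) ^ (k + 1) := by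
      rw [pow_zero]; abel
    rw [h2]
    exact Gap.sum fun k _ => Gap.pow_succ hX.neg k

lemma gap_unit_mul {u v : (Mat m)ˣ} {d : ℕ}
    (hu : Gap d ((u : Mat m) - 1)) (hv : Gap d ((v : Mat m) - 1)) :
    Gap d (((u * v : (Mat m)ˣ) : Mat m) - 1) := by
  have : ((u * v : (Mat m)ˣ) : Mat m) - 1
      = ((u : Mat m) - 1) * ((v : Mat m) - 1) + (((u : Mat m) - 1) + ((v : Mat m) - 1)) := by
    push_cast
    noncomm_ring
  rw [this]
  exact ((hu.mul hv).mono (by omega)).add (hu.add hv)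

lemma gap_unit_inv {u : (Mat m)ˣ} {d : ℕ} (hd : 1 ≤ d)
    (hu : Gap d ((u : Mat m) - 1)) :
    Gap d (((u⁻¹ : (Mat m)ˣ) : Mat m) - 1) := by
  obtain ⟨S, h1, h2, h3⟩ := unip_inv hd hu
  have hu' : (u : Mat m) = 1 + ((u : Mat m) - 1) := by noncomm_ring
  have : ((u⁻¹ : (Mat m)ˣ) : Mat m) = S := by
    apply Units.inv_eq_of_mul_eq_one_right
    rw [hu']; exact h1
  rwa [this]

/-- The unitriangular group. -/
def U (m : ℕ) : Subgroup (Mat m)ˣ where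
  carrier := {u | Gap 1 ((u : Mat m) - 1)}
  one_mem' := by
    intro i j h
    simp only [Units.val_one, sub_self]
    rfl
  mul_mem' := fun hu hv => gap_unit_mul hu hv
  inv_mem' := fun hu => gap_unit_inv le_rfl hu

lemma mem_U {u : (Mat m)ˣ} : u ∈ U m ↔ Gap 1 ((u : Mat m) - 1) := Iff.rfl

/-- Subgroups of the unitriangular group by depth. -/
def D (m d : ℕ) : Subgroup (U m) where
  carrier := {u | Gap d (((u : (Mat m)ˣ) : Mat m) - 1)}
  one_mem' := by
    intro i j h
    simp only [Subgroup.coe_one, Units.val_one, sub_self]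
    rfl
  mul_mem' := fun hu hv => gap_unit_mul hu hv
  inv_mem' := by
    intro u hu
    rcases Nat.eq_zero_or_pos d with hd | hd
    · subst hd
      exact fun i j h => gap_unit_inv le_rfl u.2 i j (by omega)
    · exact gap_unit_inv hd hu

lemma mem_D {d : ℕ} {u : U m} :
    u ∈ D m d ↔ Gap d (((u : (Mat m)ˣ) : Mat m) - 1) := Iff.rfl

lemma D_one : D m 1 = ⊤ := by
  ext u
  simp only [Subgroup.mem_top, iff_true]
  exact u.2

set_option maxHeartbeats 1000000 in
lemma gap_unit_commutator {a b : ℕ} (ha : 1 ≤ a) (hb : 1 ≤ b) {x y : (Mat m)ˣ}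
    (hx : Gap a ((x : Mat m) - 1)) (hy : Gap b ((y : Mat m) - 1)) :
    Gap (a + b) (((⁅x, y⁆ : (Mat m)ˣ) : Mat m) - 1) := by
  have h1 : ((⁅x, y⁆ : (Mat m)ˣ) : Mat m)
      = (x : Mat m) * (y : Mat m) * ((x⁻¹ : (Mat m)ˣ) : Mat m) * ((y⁻¹ : (Mat m)ˣ) : Mat m) := by
    simp [commutatorElement_def, Units.val_mul]
  set A := (x : Mat m) with hA
  set B := (y : Mat m) with hB
  set A' := ((x⁻¹ : (Mat m)ˣ) : Mat m) with hA'
  set B' := ((y⁻¹ : (Mat m)ˣ) : Mat m) with hB'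
  have hAA' : A * A' = 1 := by rw [hA, hA', ← Units.val_mul, mul_inv_cancel, Units.val_one]
  have hBB' : B * B' = 1 := by rw [hB, hB', ← Units.val_mul, mul_inv_cancel, Units.val_one]
  have e1 : A * B * A' * B' - 1
      = (((A - 1) * (B - 1) - (B - 1) * (A - 1)) * (A' * B')) + (B * (A * A') * B' - 1) := by
    noncomm_ring
  have hxi : Gap a (A' - 1) := gap_unit_inv ha hx
  have hyi : Gap b (B' - 1) := gap_unit_inv hb hy
  have hZ : Gap 1 ((A' * B') - 1) := by
    have h5 := gap_unit_mul (u := x⁻¹) (v := y⁻¹) (hxi.mono ha) (hyi.mono hb)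
    rwa [Units.val_mul] at h5
  have hW : Gap (a + b) ((A - 1) * (B - 1) - (B - 1) * (A - 1)) := by
    have h2 := hx.mul hy
    have h3 := (hy.mul hx).mono (show a + b ≤ b + a by omega)
    rw [sub_eq_add_neg]
    exact h2.add h3.neg
  have e2 : ((A - 1) * (B - 1) - (B - 1) * (A - 1)) * (A' * B')
      = ((A - 1) * (B - 1) - (B - 1) * (A - 1))
        + ((A - 1) * (B - 1) - (B - 1) * (A - 1)) * ((A' * B') - 1) := by
    noncomm_ring
  rw [h1, e1, hAA', mul_one, hBB', sub_self, add_zero, e2]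
  exact hW.add ((hW.mul hZ).mono (by omega))

lemma commutator_mem_D {a b : ℕ} (ha : 1 ≤ a) (hb : 1 ≤ b) {u v : U m}
    (hu : u ∈ D m a) (hv : v ∈ D m b) : ⁅u, v⁆ ∈ D m (a + b) := by
  rw [mem_D] at hu hv ⊢
  have hco : (((⁅u, v⁆ : U m) : (Mat m)ˣ)) = ⁅(u : (Mat m)ˣ), (v : (Mat m)ˣ)⁆ := rfl
  rw [hco]
  exact gap_unit_commutator ha hb hu hv


lemma D_eq_bot {d : ℕ} (h : m ≤ d) : D m d = ⊥ := by
  rw [eq_bot_iff]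
  intro u hu
  rw [mem_D] at hu
  have h0 : (((u : (Mat m)ˣ) : Mat m)) - 1 = 0 := (hu.mono h).eq_zero
  have h1 : ((u : (Mat m)ˣ) : Mat m) = 1 := by
    have := congrArg (· + (1 : Mat m)) h0
    simpa using this
  have h2 : (u : (Mat m)ˣ) = 1 := Units.ext h1
  have h3 : u = 1 := Subtype.ext h2
  simp [h3, Subgroup.mem_bot]

lemma derivedSeries_U_le (k : ℕ) : derivedSeries (U m) k ≤ D m (2 ^ k) := by
  induction k with
  | zero =>
      rw [derivedSeries_zero, pow_zero, D_one]
  | succ k ih =>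
      rw [derivedSeries_succ]
      have : (2 : ℕ) ^ (k + 1) = 2 ^ k + 2 ^ k := by ring
      rw [this, Subgroup.commutator_le]
      intro g hg h hh
      exact commutator_mem_D (Nat.one_le_two_pow) (Nat.one_le_two_pow) (ih hg) (ih hh)

lemma derivedSeries_U_eq_bot {k : ℕ} (h : m ≤ 2 ^ k) : derivedSeries (U m) k = ⊥ :=
  le_bot_iff.mp (le_trans (derivedSeries_U_le k) (le_of_eq (D_eq_bot h)))

/-- elementary transvection units -/
def tUnit (i j : Fin m) (hij : i ≠ j) : (Mat m)ˣ where
  val := 1 + Matrix.single i j (1 : ZMod 5)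
  inv := 1 - Matrix.single i j (1 : ZMod 5)
  val_inv := by
    have h0 : Matrix.single i j (1 : ZMod 5) * Matrix.single i j (1 : ZMod 5)
        = 0 := Matrix.single_mul_single_of_ne 1 i j i (Ne.symm hij) 1
    noncomm_ring [h0]
  inv_val := by
    have h0 : Matrix.single i j (1 : ZMod 5) * Matrix.single i j (1 : ZMod 5)
        = 0 := Matrix.single_mul_single_of_ne 1 i j i (Ne.symm hij) 1
    noncomm_ring [h0]

lemma gap_stdBasis {i j : Fin m} (h : (j : ℕ) ≥ (i : ℕ) + 1) :
    Gap 1 (Matrix.single i j (1 : ZMod 5)) := by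
  intro a b hab
  apply Matrix.single_apply_of_ne
  rintro ⟨rfl, rfl⟩
  omega

lemma fne {i j : Fin m} (hij : (i : ℕ) < (j : ℕ)) : i ≠ j := by
  intro h; rw [h] at hij; omega

lemma tUnit_mem_U {i j : Fin m} (hij : (i : ℕ) < (j : ℕ)) :
    tUnit i j (fne hij) ∈ U m := by
  rw [mem_U]
  have h1 : ((tUnit i j (fne hij) : (Mat m)ˣ) : Mat m)
      = 1 + Matrix.single i j (1 : ZMod 5) := rfl
  rw [h1, add_sub_cancel_left]
  exact gap_stdBasis (by omega)

/-- the transvection as an element of `U m` -/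
def tEl (i j : Fin m) (hij : (i : ℕ) < (j : ℕ)) : U m :=
  ⟨tUnit i j (fne hij), tUnit_mem_U hij⟩

set_option maxHeartbeats 1000000 in
lemma tUnit_commutator {i j k : Fin m} (hij : (i : ℕ) < (j : ℕ)) (hjk : (j : ℕ) < (k : ℕ)) :
    ⁅tUnit i j (fne hij), tUnit j k (fne hjk)⁆ = tUnit i k (fne (lt_trans hij hjk)) := by
  have hik : (i : ℕ) < (k : ℕ) := lt_trans hij hjk
  apply Units.ext
  set E := Matrix.single i j (1 : ZMod 5) with hEdef
  set F := Matrix.single j k (1 : ZMod 5) with hFdef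
  have hEF : E * F = Matrix.single i k (1 : ZMod 5) := by
    rw [hEdef, hFdef, Matrix.single_mul_single_same, one_mul]
  have hFE : F * E = 0 := Matrix.single_mul_single_of_ne 1 j k i (Ne.symm (fne hik)) 1
  have hEE : E * E = 0 := Matrix.single_mul_single_of_ne 1 i j i (Ne.symm (fne hij)) 1
  have hFF : F * F = 0 := Matrix.single_mul_single_of_ne 1 j k j (Ne.symm (fne hjk)) 1
  have z1 : ∀ X : Mat m, E * (E * X) = 0 := fun X => by rw [← mul_assoc, hEE, zero_mul]
  have z2 : ∀ X : Mat m, F * (F * X) = 0 := fun X => by rw [← mul_assoc, hFF, zero_mul]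
  have z3 : ∀ X : Mat m, F * (E * X) = 0 := fun X => by rw [← mul_assoc, hFE, zero_mul]
  have c1 : ((tUnit i j (fne hij) : (Mat m)ˣ) : Mat m) = 1 + E := rfl
  have c2 : ((tUnit j k (fne hjk) : (Mat m)ˣ) : Mat m) = 1 + F := rfl
  have c3 : (((tUnit i j (fne hij))⁻¹ : (Mat m)ˣ) : Mat m) = 1 - E := rfl
  have c4 : (((tUnit j k (fne hjk))⁻¹ : (Mat m)ˣ) : Mat m) = 1 - F := rfl
  have hgoal : ((⁅tUnit i j (fne hij), tUnit j k (fne hjk)⁆ : (Mat m)ˣ) : Mat m)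
      = ((1 + E) * (1 + F)) * ((1 - E) * (1 - F)) := by
    rw [commutatorElement_def]
    simp only [Units.val_mul, c1, c2, c3, c4]
    rw [mul_assoc]
  rw [hgoal]
  have hrhs : ((tUnit i k (fne hik) : (Mat m)ˣ) : Mat m)
      = 1 + Matrix.single i k (1 : ZMod 5) := rfl
  rw [hrhs, ← hEF]
  have h1 : (1 + E) * (1 + F) = 1 + E + F + E * F := by noncomm_ring
  have h2 : (1 - E) * (1 - F) = 1 - E - F + E * F := by noncomm_ring
  rw [h1, h2]
  simp only [mul_add, add_mul, mul_sub, sub_mul, mul_one, one_mul, mul_assoc, hEE, hFF, hFE,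
    z1, z2, z3, mul_zero, zero_mul, add_zero, zero_add, sub_zero, zero_sub]
  abel


lemma coe_tEl {i j : Fin m} (hij : (i : ℕ) < (j : ℕ)) :
    ((tEl i j hij : (Mat m)ˣ)) = tUnit i j (fne hij) := rfl

lemma tEl_commutator {i j k : Fin m} (hij : (i : ℕ) < (j : ℕ)) (hjk : (j : ℕ) < (k : ℕ)) :
    ⁅tEl i j hij, tEl j k hjk⁆ = tEl i k (lt_trans hij hjk) := by
  apply Subtype.ext
  show ⁅(tEl i j hij : (Mat m)ˣ), (tEl j k hjk : (Mat m)ˣ)⁆ = (tEl i k (lt_trans hij hjk) : (Mat m)ˣ)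
  rw [coe_tEl, coe_tEl, coe_tEl]
  exact tUnit_commutator hij hjk

lemma tEl_mem_derivedSeries (kk : ℕ) :
    ∀ (i j : Fin m) (_ : (j : ℕ) = (i : ℕ) + 2 ^ kk),
      tEl i j (by have := Nat.one_le_two_pow (n := kk); omega) ∈ derivedSeries (U m) kk := by
  induction kk with
  | zero => intro i j h; exact Subgroup.mem_top _
  | succ kk ih =>
      intro i j h
      have hp1 : 1 ≤ 2 ^ kk := Nat.one_le_two_pow
      have hpow : 2 ^ (kk + 1) = 2 ^ kk + 2 ^ kk := by ring
      have hjm : (j : ℕ) < m := j.2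
      have hmlt : (i : ℕ) + 2 ^ kk < m := by omega
      set mid : Fin m := ⟨(i : ℕ) + 2 ^ kk, hmlt⟩ with hmiddef
      have h1 : (mid : ℕ) = (i : ℕ) + 2 ^ kk := rfl
      have h2 : (j : ℕ) = (mid : ℕ) + 2 ^ kk := by omega
      have hi : (i : ℕ) < (mid : ℕ) := by omega
      have hj : (mid : ℕ) < (j : ℕ) := by omega
      have hmem := Subgroup.commutator_mem_commutator (ih i mid h1) (ih mid j h2)
      rw [← derivedSeries_succ] at hmem
      have heq : ⁅tEl i mid (by omega), tEl mid j (by omega)⁆ = tEl i j (by omega) :=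
        tEl_commutator hi hj
      rwa [heq] at hmem

lemma tEl_ne_one {i j : Fin m} (hij : (i : ℕ) < (j : ℕ)) : tEl i j hij ≠ 1 := by
  intro h
  have h1 : ((tEl i j hij : (Mat m)ˣ) : Mat m) = 1 := by rw [h]; rfl
  have h2 : ((tEl i j hij : (Mat m)ˣ) : Mat m) i j = (1 : Mat m) i j := by rw [h1]
  have h3 : ((tEl i j hij : (Mat m)ˣ) : Mat m) i j = 1 := by
    show ((1 : Mat m) + Matrix.single i j (1 : ZMod 5)) i j = 1
    rw [Matrix.add_apply, Matrix.one_apply_ne (fne hij), Matrix.single_apply_same,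
      zero_add]
  have h4 : (1 : Mat m) i j = 0 := Matrix.one_apply_ne (fne hij)
  rw [h3, h4] at h2
  exact absurd h2 (by decide)

lemma derivedSeries_U_ne_bot {kk : ℕ} (h : 2 ^ kk < m) : derivedSeries (U m) kk ≠ ⊥ := by
  intro hbot
  have hp1 : 1 ≤ 2 ^ kk := Nat.one_le_two_pow
  have hm : 0 < m := by omega
  set i0 : Fin m := ⟨0, hm⟩
  set j0 : Fin m := ⟨2 ^ kk, h⟩
  have hij : (j0 : ℕ) = (i0 : ℕ) + 2 ^ kk := by simp [i0, j0]
  have hmem := tEl_mem_derivedSeries kk i0 j0 hij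
  rw [hbot, Subgroup.mem_bot] at hmem
  exact tEl_ne_one _ hmem


lemma isPGroup_U : IsPGroup 5 (U m) := by
  intro u
  rcases Nat.eq_zero_or_pos m with hm | hm
  · subst hm
    refine ⟨0, ?_⟩
    apply Subtype.ext
    apply Units.ext
    ext i j
    exact i.elim0
  · haveI : Nonempty (Fin m) := ⟨⟨0, hm⟩⟩
    haveI : Fact (Nat.Prime 5) := ⟨by norm_num⟩
    refine ⟨m, ?_⟩
    set X := ((u : (Mat m)ˣ) : Mat m) - 1 with hXdef
    have hX : Gap 1 X := u.2
    have hm5 : m ≤ 5 ^ m := le_of_lt (Nat.lt_pow_self (by norm_num))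
    have hXm : X ^ (5 ^ m) = 0 := by
      have h1 : X ^ m = 0 := Gap.pow_eq_zero le_rfl hX
      have h2 : X ^ (5 ^ m) = X ^ m * X ^ (5 ^ m - m) := by
        rw [← pow_add, Nat.add_sub_cancel' hm5]
      rw [h2, h1, zero_mul]
    have hpow : ((u : (Mat m)ˣ) : Mat m) ^ (5 ^ m) = 1 := by
      have hu : ((u : (Mat m)ˣ) : Mat m) = 1 + X := by rw [hXdef]; abel
      rw [hu, add_pow_char_pow_of_commute _ _ (Commute.one_left X), one_pow, hXm, add_zero]
    apply Subtype.ext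
    apply Units.ext
    show (((u ^ 5 ^ m : U m) : (Mat m)ˣ) : Mat m) = ((1 : (Mat m)ˣ) : Mat m)
    calc (((u ^ 5 ^ m : U m) : (Mat m)ˣ) : Mat m)
        = (((u : (Mat m)ˣ) ^ 5 ^ m : (Mat m)ˣ) : Mat m) := by
          norm_cast
      _ = ((u : (Mat m)ˣ) : Mat m) ^ 5 ^ m := Units.val_pow_eq_pow_val _ _
      _ = 1 := hpow
      _ = ((1 : (Mat m)ˣ) : Mat m) := by rw [Units.val_one]

lemma card_U_coprime : Nat.Coprime 6 (Nat.card (U m)) := by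
  haveI : Fact (Nat.Prime 5) := ⟨by norm_num⟩
  obtain ⟨e, he⟩ := IsPGroup.iff_card.mp (isPGroup_U (m := m))
  rw [he]
  exact Nat.Coprime.pow_right _ (by norm_num)


/-! ### The symmetric group on three letters -/

abbrev S3 := Equiv.Perm (Fin 3)

lemma card_S3 : Nat.card S3 = 6 := by
  simp [Nat.card_eq_fintype_card, Fintype.card_perm]; rfl

lemma S3_not_nilpotent : ¬ Group.IsNilpotent S3 := by
  intro h
  obtain ⟨n, hn⟩ := nilpotent_iff_lowerCentralSeries.mp h
  set c : S3 := finRotate 3 with hc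
  have key : ∀ k, c ∈ (⊤ : Subgroup S3).lowerCentralSeries k := by
    intro k
    induction k with
    | zero => exact Subgroup.mem_top _
    | succ k ih =>
        have h2 : ⁅c, Equiv.swap (0 : Fin 3) 1⁆ ∈ (⊤ : Subgroup S3).lowerCentralSeries (k + 1) := by
          rw [lowerCentralSeries_succ]
          exact Subgroup.commutator_mem_commutator ih (Subgroup.mem_top _)
        have h3 : ⁅c, Equiv.swap (0 : Fin 3) 1⁆ = c * c := by decide
        rw [h3] at h2
        have h4 : (c * c) * (c * c) = c := by decide
        rw [← h4]
        exact mul_mem h2 h2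
  have := key n
  rw [hn, Subgroup.mem_bot] at this
  exact absurd this (by decide)

lemma S3_subgroup_eq_top (T : Subgroup S3) (h : ¬ Group.IsNilpotent T) : T = ⊤ := by
  have h1 : 0 < Nat.card T := Nat.card_pos
  have h2 : Nat.card T ∣ 6 := card_S3 ▸ Subgroup.card_subgroup_dvd_card T
  have h3 : Nat.card T ≤ 6 := Nat.le_of_dvd (by norm_num) h2
  interval_cases hcard : (Nat.card T)
  · exfalso
    haveI : Subsingleton T :=
      (Nat.card_eq_one_iff_unique.mp hcard).1
    exact h inferInstance
  · exfalso
    haveI : Fact (Nat.Prime 2) := ⟨by norm_num⟩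
    exact h ((IsPGroup.of_card (p := 2) (n := 1) (by simpa using hcard)).isNilpotent)
  · exfalso
    haveI : Fact (Nat.Prime 3) := ⟨by norm_num⟩
    exact h ((IsPGroup.of_card (p := 3) (n := 1) (by simpa using hcard)).isNilpotent)
  · exact absurd h2 (by norm_num)
  · exact absurd h2 (by norm_num)
  · exact (Subgroup.card_eq_iff_eq_top T).mp (by rw [hcard, card_S3])

lemma S3_derivedSeries_two : derivedSeries S3 2 = ⊥ := by
  have hker : derivedSeries S3 1 ≤ (Equiv.Perm.sign : S3 →* ℤˣ).ker := by
    rw [derivedSeries_succ, Subgroup.commutator_le]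
    intro g _ h _
    rw [MonoidHom.mem_ker, map_commutatorElement]
    exact commutatorElement_eq_one_iff_commute.mpr (mul_comm _ _)
  have hcomm : ∀ g h : S3, Equiv.Perm.sign g = 1 → Equiv.Perm.sign h = 1 → g * h = h * g := by
    decide
  have h2 : derivedSeries S3 2 ≤ ⊥ := by
    rw [derivedSeries_succ, Subgroup.commutator_le]
    intro g hg h hh
    rw [Subgroup.mem_bot]
    exact commutatorElement_eq_one_iff_commute.mpr
      (hcomm g h (MonoidHom.mem_ker.mp (hker hg)) (MonoidHom.mem_ker.mp (hker hh)))
  exact le_bot_iff.mp h2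

lemma derivedSeries_stable (G : Type*) [Group G] {k : ℕ} (h : derivedSeries G k = ⊥) (j : ℕ) :
    derivedSeries G (k + j) = ⊥ := by
  induction j with
  | zero => exact h
  | succ j ih =>
      rw [← Nat.add_assoc, derivedSeries_succ, ih, Subgroup.commutator_bot_left]

lemma S3_derivedSeries {k : ℕ} (hk : 2 ≤ k) : derivedSeries S3 k = ⊥ := by
  obtain ⟨j, rfl⟩ := Nat.exists_eq_add_of_le hk
  exact derivedSeries_stable S3 S3_derivedSeries_two j

/-! ### Derived series and subgroups of products -/

lemma derivedSeries_prod (A B : Type*) [Group A] [Group B] (k : ℕ) :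
    derivedSeries (A × B) k = (derivedSeries A k).prod (derivedSeries B k) := by
  induction k with
  | zero => rw [derivedSeries_zero, derivedSeries_zero, derivedSeries_zero,
      Subgroup.top_prod_top]
  | succ k ih =>
      rw [derivedSeries_succ, ih, Subgroup.commutator_prod_prod, ← derivedSeries_succ,
        ← derivedSeries_succ]

section Coprod

variable {A B : Type*} [Group A] [Group B] [Finite A] [Finite B]
variable (hco : Nat.Coprime (Nat.card A) (Nat.card B))
set_option linter.unusedSectionVars false

include hco in
lemma snd_mem_of_mem {T : Subgroup (A × B)} {a : A} {b : B} (h : (a, b) ∈ T) :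
    ((1, b) : A × B) ∈ T := by
  set k := Nat.card A with hk
  have hcop : Nat.Coprime k (orderOf b) :=
    Nat.Coprime.coprime_dvd_right (orderOf_dvd_natCard b) hco
  obtain ⟨c, hc⟩ := exists_pow_eq_self_of_coprime hcop
  have h1 : ((a, b) ^ k) ^ c ∈ T := pow_mem (pow_mem h k) c
  have h2 : ((a, b) ^ k) ^ c = (1, b) := by
    have ha : a ^ k = 1 := pow_card_eq_one'
    rw [Prod.pow_mk, Prod.pow_mk, ha, one_pow, hc]
  rwa [h2] at h1

include hco in
lemma fst_mem_of_mem {T : Subgroup (A × B)} {a : A} {b : B} (h : (a, b) ∈ T) :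
    ((a, 1) : A × B) ∈ T := by
  have h1 := snd_mem_of_mem hco h
  have h2 : ((a, b) : A × B) * ((1, b) : A × B)⁻¹ = (a, 1) := by
    simp [Prod.ext_iff]
  rw [← h2]
  exact mul_mem h (inv_mem h1)

include hco in
lemma subgroup_prod_decomp (T : Subgroup (A × B)) :
    T = (T.map (MonoidHom.fst A B)).prod (T.map (MonoidHom.snd A B)) := by
  ext ⟨a, b⟩
  rw [Subgroup.mem_prod]
  constructor
  · intro h
    exact ⟨⟨(a, b), h, rfl⟩, ⟨(a, b), h, rfl⟩⟩
  · rintro ⟨⟨⟨a₁, b₁⟩, h1, rfl⟩, ⟨⟨a₂, b₂⟩, h2, rfl⟩⟩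
    have ha : ((a₁, 1) : A × B) ∈ T := fst_mem_of_mem hco h1
    have hb : ((1, b₂) : A × B) ∈ T := snd_mem_of_mem hco h2
    simpa using mul_mem ha hb

end Coprod

end SchmidtHall

set_option synthInstance.maxHeartbeats 400000 in
set_option maxHeartbeats 1000000 in
open SchmidtHall in
/-- Remark 2: for every `n ≥ 3` there is a finite non-nilpotent group, all of whose Schmidt
subgroups are Hall subgroups, with derived length exactly `n`. -/
theorem stmt_14 (n : ℕ) (hn : 3 ≤ n) :
    ∃ (G : Type) (_ : Group G) (_ : Finite G),
      ¬ Group.IsNilpotent G ∧ EverySchmidtIsHall G ∧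
      derivedSeries G n = ⊥ ∧ derivedSeries G (n - 1) ≠ ⊥ := by
  classical
  set m : ℕ := 2 ^ (n - 1) + 1 with hm
  haveI : Fact (Nat.Prime 5) := ⟨by norm_num⟩
  refine ⟨S3 × (U m), inferInstance, inferInstance, ?_, ?_, ?_, ?_⟩
  · intro h
    exact S3_not_nilpotent (nilpotent_of_surjective (MonoidHom.fst S3 (U m)) Prod.fst_surjective)
  · intro T hT
    obtain ⟨hTfin, hTnn, hTsub⟩ := hT
    have hco : Nat.Coprime (Nat.card S3) (Nat.card (U m)) := by
      rw [card_S3]; exact card_U_coprime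
    have hdec := subgroup_prod_decomp hco T
    set T1 := T.map (MonoidHom.fst S3 (U m)) with hT1def
    set T2 := T.map (MonoidHom.snd S3 (U m)) with hT2def
    have hT2nil : Group.IsNilpotent T2 := ((isPGroup_U (m := m)).to_subgroup T2).isNilpotent
    by_cases h1 : T1 = ⊤
    · by_cases h2 : T2 = ⊥
      · -- `T` is the Hall subgroup `S3 × 1`.
        rw [h1, h2] at hdec
        have hcard : Nat.card T = 6 := by
          rw [hdec]
          rw [Nat.card_congr (Subgroup.prodEquiv (⊤ : Subgroup S3)
            (⊥ : Subgroup (U m))).toEquiv, Nat.card_prod, Subgroup.card_top, Subgroup.card_bot,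
            card_S3, mul_one]
        have hGcard : Nat.card (S3 × (U m)) = 6 * Nat.card (U m) := by
          rw [Nat.card_prod, card_S3]
        have hmi := Subgroup.card_mul_index T
        rw [hcard, hGcard] at hmi
        have hidx : T.index = Nat.card (U m) :=
          Nat.eq_of_mul_eq_mul_left (by norm_num) hmi
        show Nat.Coprime (Nat.card T) T.index
        rw [hcard, hidx]
        exact card_U_coprime
      · exfalso
        obtain ⟨a, hane⟩ := Subgroup.ne_bot_iff_exists_ne_one.mp h2
        have hbT2 : (a : U m) ∈ T2 := a.2
        have hbne : (a : U m) ≠ 1 := fun h => hane (Subtype.ext h)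
        obtain ⟨⟨a', b'⟩, hmemT, heq⟩ := Subgroup.mem_map.mp hbT2
        have h1b : ((1, (a : U m)) : S3 × (U m)) ∈ T := by
          have := snd_mem_of_mem hco hmemT
          rwa [show b' = (a : U m) from heq] at this
        set P : Subgroup (S3 × (U m)) := (⊤ : Subgroup S3).prod ⊥ with hP
        have hPle : P ≤ T := by
          rintro ⟨x, y⟩ hxy
          rw [hP, Subgroup.mem_prod] at hxy
          have hy : y = 1 := hxy.2
          rw [hdec, Subgroup.mem_prod]
          exact ⟨by rw [h1]; trivial, by rw [hy]; exact one_mem _⟩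
        have hne : P.subgroupOf T ≠ ⊤ := by
          rw [Ne, Subgroup.subgroupOf_eq_top]
          intro hle
          have hmem := hle h1b
          rw [hP, Subgroup.mem_prod] at hmem
          exact hbne hmem.2
        have hnil := hTsub (P.subgroupOf T) hne
        haveI := hnil
        haveI : Group.IsNilpotent P := nilpotent_of_mulEquiv (Subgroup.subgroupOfEquivOfLe hPle)
        haveI : Group.IsNilpotent ((⊤ : Subgroup S3) × (⊥ : Subgroup (U m))) :=
          nilpotent_of_mulEquiv (Subgroup.prodEquiv _ _)
        haveI : Nonempty (⊥ : Subgroup (U m)) := ⟨1⟩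
        haveI : Group.IsNilpotent (⊤ : Subgroup S3) :=
          nilpotent_of_surjective
            (MonoidHom.fst (⊤ : Subgroup S3) (⊥ : Subgroup (U m))) Prod.fst_surjective
        haveI : Group.IsNilpotent S3 := nilpotent_of_mulEquiv Subgroup.topEquiv
        exact S3_not_nilpotent this
    · exfalso
      have hT1nil : Group.IsNilpotent T1 := by
        by_contra hc
        exact h1 (S3_subgroup_eq_top T1 hc)
      haveI := hT1nil
      haveI := hT2nil
      haveI : Group.IsNilpotent (T1 × T2) := isNilpotent_prod
      have hnilT : Group.IsNilpotent (T1.prod T2) :=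
        nilpotent_of_mulEquiv (Subgroup.prodEquiv T1 T2).symm
      rw [← hdec] at hnilT
      exact hTnn hnilT
  · have hmle : m ≤ 2 ^ n := by
      have h1 : 1 ≤ 2 ^ (n - 1) := Nat.one_le_two_pow
      have h2 : 2 ^ n = 2 ^ (n - 1) * 2 := by
        rw [← _root_.pow_succ]
        congr 1
        omega
      omega
    rw [derivedSeries_prod, S3_derivedSeries (by omega), derivedSeries_U_eq_bot hmle,
      Subgroup.bot_prod_bot]
  · intro hbot
    rw [derivedSeries_prod] at hbot
    have hUbot : derivedSeries (U m) (n - 1) = ⊥ := by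
      rw [eq_bot_iff]
      intro x hx
      have hmem : ((1, x) : S3 × (U m)) ∈
          (derivedSeries S3 (n - 1)).prod (derivedSeries (U m) (n - 1)) :=
        Subgroup.mem_prod.mpr ⟨one_mem _, hx⟩
      rw [hbot, Subgroup.mem_bot] at hmem
      rw [Subgroup.mem_bot]
      exact congrArg Prod.snd hmem
    exact derivedSeries_U_ne_bot (show 2 ^ (n - 1) < m from Nat.lt_succ_self _) hUbot
end

section
/- Let S be a Schmidt group with normal Sylow p-subgroup P (p a prime). If P is nonabelian, then Z(P) = P' = Φ(P), where P' is the derived subgroup of P and Φ(P) is the Frattini subgroup of P. -/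
open Pointwise
open scoped commutatorElement

universe u


private lemma aux_commute_of_coprime (k : ℕ) :
    ∀ (G : Type u) [Group G] [Finite G] [Group.IsNilpotent G],
      Group.nilpotencyClass G ≤ k → ∀ a b : G,
      Nat.Coprime (orderOf a) (orderOf b) → Commute a b := by
  induction k with
  | zero =>
    intro G _ _ _ hc a b _
    have : Subsingleton G := nilpotencyClass_zero_iff_subsingleton.mp (Nat.le_zero.mp hc)
    have : a = b := Subsingleton.elim a b
    rw [this]
  | succ k ih =>
    intro G _ _ _ hc a b hab
    set Z := Subgroup.center G
    have hq : Group.nilpotencyClass (G ⧸ Z) ≤ k := by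
      rw [nilpotencyClass_quotient_center]
      omega
    have hcom : Commute ((a : G ⧸ Z)) ((b : G ⧸ Z)) := by
      refine ih (G ⧸ Z) hq _ _ ?_
      have h1 : orderOf ((a : G ⧸ Z)) ∣ orderOf a := orderOf_map_dvd (QuotientGroup.mk' Z) a
      have h2 : orderOf ((b : G ⧸ Z)) ∣ orderOf b := orderOf_map_dvd (QuotientGroup.mk' Z) b
      exact Nat.Coprime.coprime_dvd_right h2 (Nat.Coprime.coprime_dvd_left h1 hab)
    have hcz : ⁅a, b⁆ ∈ Z := by
      have h1 : ((⁅a, b⁆ : G) : G ⧸ Z) = ⁅(a : G ⧸ Z), (b : G ⧸ Z)⁆ :=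
        map_commutatorElement (QuotientGroup.mk' Z) a b
      rw [← QuotientGroup.eq_one_iff, h1, commutatorElement_eq_one_iff_commute]
      exact hcom
    set c := ⁅a, b⁆ with hc_def
    have hcomm : ∀ g : G, Commute c g := fun g => (Subgroup.mem_center_iff.mp hcz g).symm
    have claim1 : ∀ m : ℕ, ⁅a ^ m, b⁆ = c ^ m := by
      intro m
      induction m with
      | zero => simp
      | succ m ihm =>
        have key : ⁅a ^ (m + 1), b⁆ = a * ⁅a ^ m, b⁆ * a⁻¹ * ⁅a, b⁆ := by
          rw [pow_succ']
          simp only [commutatorElement_def]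
          group
        rw [key, ihm, ← hc_def, ← ((hcomm a).pow_left m).eq]
        group
    have claim2 : ∀ m : ℕ, ⁅a, b ^ m⁆ = c ^ m := by
      intro m
      induction m with
      | zero => simp
      | succ m ihm =>
        have key : ⁅a, b ^ (m + 1)⁆ = ⁅a, b⁆ * (b * ⁅a, b ^ m⁆ * b⁻¹) := by
          rw [pow_succ']
          simp only [commutatorElement_def]
          group
        rw [key, ihm, ← hc_def, ← ((hcomm b).pow_left m).eq]
        group
    have h1 : c ^ orderOf a = 1 := by
      rw [← claim1, pow_orderOf_eq_one, commutatorElement_one_left]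
    have h2 : c ^ orderOf b = 1 := by
      rw [← claim2, pow_orderOf_eq_one, commutatorElement_one_right]
    have : orderOf c ∣ Nat.gcd (orderOf a) (orderOf b) :=
      Nat.dvd_gcd (orderOf_dvd_of_pow_eq_one h1) (orderOf_dvd_of_pow_eq_one h2)
    rw [hab] at this
    rw [← commutatorElement_eq_one_iff_commute, ← hc_def]
    exact orderOf_eq_one_iff.mp (Nat.dvd_one.mp this)

private lemma commute_of_coprime {G : Type u} [Group G] [Finite G]
    (hG : Group.IsNilpotent G) {a b : G}
    (h : Nat.Coprime (orderOf a) (orderOf b)) : Commute a b :=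
  aux_commute_of_coprime (Group.nilpotencyClass G) G le_rfl a b h

private lemma exists_good_element {S : Type u} [Group S] [Finite S] (hS : IsSchmidtGroup S)
    {p : ℕ} (hp : p.Prime) (P : Sylow p S) (hPn : (P : Subgroup S).Normal)
    (hnab : ¬ ∀ a b : ↥(P : Subgroup S), a * b = b * a) :
    ∃ y : S, Nat.Coprime (orderOf y) (Nat.card ↥(P : Subgroup S)) ∧
      (P : Subgroup S) ⊔ Subgroup.zpowers y = ⊤ ∧ ∃ x ∈ (P : Subgroup S), ¬ Commute x y := by
  haveI : Fact p.Prime := ⟨hp⟩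
  by_contra hcon
  push_neg at hcon
  -- every element of order coprime to |P| centralizes P
  have hcent : ∀ y : S, Nat.Coprime (orderOf y) (Nat.card ↥(P : Subgroup S)) →
      y ∈ Subgroup.centralizer (P : Subgroup S) := by
    intro y hy
    rw [Subgroup.mem_centralizer_iff]
    intro x hx
    rcases eq_or_ne ((P : Subgroup S) ⊔ Subgroup.zpowers y) ⊤ with htop | htop
    · exact hcon y hy htop x hx
    · have hnil := hS.2.2 _ htop
      set H := (P : Subgroup S) ⊔ Subgroup.zpowers y with hH
      have hxH : x ∈ H := le_sup_left (α := Subgroup S) hx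
      have hyH : y ∈ H := le_sup_right (α := Subgroup S) (Subgroup.mem_zpowers y)
      have hcop : Nat.Coprime (orderOf (⟨x, hxH⟩ : ↥H)) (orderOf (⟨y, hyH⟩ : ↥H)) := by
        rw [Subgroup.orderOf_mk, Subgroup.orderOf_mk]
        exact (hy.coprime_dvd_right ((P : Subgroup S).orderOf_dvd_natCard hx)).symm
      have := commute_of_coprime hnil hcop
      exact congrArg Subtype.val this
  -- hence P together with its centralizer is everything
  set C := Subgroup.centralizer ((P : Subgroup S) : Set S) with hC
  have hD : (P : Subgroup S) ⊔ C = ⊤ := by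
    rw [← Subgroup.index_eq_one]
    by_contra h1
    obtain ⟨q, hq, hqd⟩ := Nat.exists_prime_and_dvd h1
    haveI : Fact q.Prime := ⟨hq⟩
    obtain ⟨Q⟩ : Nonempty (Sylow q S) := Sylow.nonempty
    rcases eq_or_ne q p with rfl | hqp
    · have h2 : ((P : Subgroup S) ⊔ C).index ∣ (P : Subgroup S).index :=
        Subgroup.index_dvd_of_le le_sup_left
      exact P.not_dvd_index (hqd.trans h2)
    · have hQC : (Q : Subgroup S) ≤ C := by
        intro x hx
        apply hcent
        obtain ⟨k, hk⟩ := Q.2 ⟨x, hx⟩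
        have hxord : orderOf x ∣ q ^ k := by
          apply orderOf_dvd_of_pow_eq_one
          have := congrArg Subtype.val hk
          simpa using this
        obtain ⟨n, hn⟩ := (IsPGroup.iff_card (p := p)
          (G := ↥(P : Subgroup S))).mp P.isPGroup'
        rw [hn]
        have : Nat.Coprime (q ^ k) (p ^ n) :=
          Nat.Coprime.pow _ _ (((Nat.coprime_primes hq hp).mpr hqp))
        exact Nat.Coprime.coprime_dvd_left hxord this
      have h2 : ((P : Subgroup S) ⊔ C).index ∣ (Q : Subgroup S).index :=
        Subgroup.index_dvd_of_le (le_trans hQC le_sup_right)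
      exact Q.not_dvd_index (hqd.trans h2)
  -- C is proper
  have hCne : C ≠ ⊤ := by
    intro h
    apply hnab
    intro a b
    have hb : (b : S) ∈ C := h ▸ Subgroup.mem_top _
    have := Subgroup.mem_centralizer_iff.mp hb (a : S) a.2
    exact Subtype.ext this
  -- C is normal
  have hCnorm : C.Normal := by
    constructor
    intro n hn g
    rw [Subgroup.mem_centralizer_iff]
    intro h hh
    have hh' : g⁻¹ * h * g ∈ (P : Subgroup S) := by
      have := hPn.conj_mem h hh g⁻¹
      simpa using this
    have h1 : (g⁻¹ * h * g) * n = n * (g⁻¹ * h * g) :=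
      Subgroup.mem_centralizer_iff.mp hn _ hh'
    have h2 := congrArg (fun z => g * z * g⁻¹) h1
    simp only [mul_assoc, mul_inv_cancel_left, inv_mul_cancel_left] at h2 ⊢
    simp only [mul_inv_cancel, mul_one] at h2
    exact h2
  haveI := hCnorm
  have hnilC : Group.IsNilpotent ↥C := hS.2.2 C hCne
  have hnilP : Group.IsNilpotent ↥(P : Subgroup S) := P.isPGroup'.isNilpotent
  have comm : ∀ (a : ↥(P : Subgroup S)) (b : ↥C),
      Commute ((P : Subgroup S).subtype a) (C.subtype b) := by
    intro a b
    exact (Subgroup.mem_centralizer_iff.mp b.2 _ a.2)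
  set φ := MonoidHom.noncommCoprod ((P : Subgroup S).subtype) C.subtype comm with hφ
  have hsurj : Function.Surjective φ := by
    intro s
    have hs : s ∈ ((P : Subgroup S) : Set S) * (C : Set S) := by
      rw [← Subgroup.mul_normal, hD]
      trivial
    obtain ⟨a, ha, b, hb, rfl⟩ := hs
    exact ⟨(⟨a, ha⟩, ⟨b, hb⟩), rfl⟩
  exact hS.2.1 (nilpotent_of_surjective φ hsurj)

private lemma commute_of_proper {S : Type u} [Group S] [Finite S] (hS : IsSchmidtGroup S)
    {P : Subgroup S} {y : S}
    (hy : Nat.Coprime (orderOf y) (Nat.card ↥P))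
    {N : Subgroup S} (hNP : N ≤ P) (hNnorm : N.Normal) (hNne : N ≠ P) :
    ∀ n ∈ N, Commute n y := by
  haveI := hNnorm
  intro n hn
  have hprop : N ⊔ Subgroup.zpowers y ≠ ⊤ := by
    intro htop
    apply hNne
    refine le_antisymm hNP ?_
    intro x hx
    have hx' : x ∈ (↑N * ↑(Subgroup.zpowers y) : Set S) := by
      rw [← Subgroup.normal_mul, htop]; trivial
    obtain ⟨a, ha, b, hb, rfl⟩ := hx'
    have hbP : b ∈ P := by
      have : a⁻¹ * (a * b) ∈ P := P.mul_mem (P.inv_mem (hNP ha)) hx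
      simpa using this
    have hb1 : b = 1 := by
      have h1 : orderOf b ∣ Nat.card ↥P := P.orderOf_dvd_natCard hbP
      have h2 : orderOf b ∣ orderOf y := by
        obtain ⟨m, rfl⟩ := hb
        apply orderOf_dvd_of_pow_eq_one
        rw [← zpow_natCast, ← zpow_mul, mul_comm, zpow_mul, zpow_natCast,
          pow_orderOf_eq_one, one_zpow]
      have : orderOf b ∣ Nat.gcd (orderOf y) (Nat.card ↥P) := Nat.dvd_gcd h2 h1
      rw [hy] at this
      simpa [orderOf_eq_one_iff] using Nat.dvd_one.mp this
    simpa [hb1] using ha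
  have hnil := hS.2.2 _ hprop
  set H := N ⊔ Subgroup.zpowers y with hH
  have hnH : n ∈ H := le_sup_left (α := Subgroup S) hn
  have hyH : y ∈ H := le_sup_right (α := Subgroup S) (Subgroup.mem_zpowers y)
  have hcop : Nat.Coprime (orderOf (⟨n, hnH⟩ : ↥H)) (orderOf (⟨y, hyH⟩ : ↥H)) := by
    rw [Subgroup.orderOf_mk, Subgroup.orderOf_mk]
    exact (hy.coprime_dvd_right (P.orderOf_dvd_natCard (hNP hn))).symm
  exact congrArg Subtype.val (commute_of_coprime hnil hcop)

private lemma commutator_with_zpowers_normal {S : Type u} [Group S] {P : Subgroup S}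
    (hPn : P.Normal) {y : S}
    (htop : P ⊔ Subgroup.zpowers y = ⊤) :
    (⁅P, Subgroup.zpowers y⁆ : Subgroup S).Normal := by
  set Zy := Subgroup.zpowers y with hZy
  set K := (⁅P, Zy⁆ : Subgroup S) with hK
  have key : ∀ g : S, (∀ u ∈ P, ∀ z ∈ Zy, g * ⁅u, z⁆ * g⁻¹ ∈ K) →
      ∀ k ∈ K, g * k * g⁻¹ ∈ K := by
    intro g hgen k hk
    have hk' : k ∈ Subgroup.closure {x : S | ∃ g₁ ∈ P, ∃ g₂ ∈ Zy, ⁅g₁, g₂⁆ = x} := hk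
    induction hk' using Subgroup.closure_induction with
    | mem x hx =>
        obtain ⟨u, hu, z, hz, rfl⟩ := hx
        exact hgen u hu z hz
    | one => simpa using K.one_mem
    | mul a b ha hb iha ihb =>
        have h1 : g * (a * b) * g⁻¹ = (g * a * g⁻¹) * (g * b * g⁻¹) := by group
        rw [h1]; exact K.mul_mem (iha ha) (ihb hb)
    | inv a ha iha =>
        have h1 : g * a⁻¹ * g⁻¹ = (g * a * g⁻¹)⁻¹ := by group
        rw [h1]; exact K.inv_mem (iha ha)
  have hmemP : ∀ x ∈ P, ∀ k ∈ K, x * k * x⁻¹ ∈ K := by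
    intro x hx
    apply key
    intro u hu z hz
    have hid : x * ⁅u, z⁆ * x⁻¹ = ⁅x * u, z⁆ * ⁅x, z⁆⁻¹ := by
      simp only [commutatorElement_def]; group
    rw [hid]
    exact K.mul_mem (Subgroup.commutator_mem_commutator (P.mul_mem hx hu) hz)
      (K.inv_mem (Subgroup.commutator_mem_commutator hx hz))
  have hmemZ : ∀ w ∈ Zy, ∀ k ∈ K, w * k * w⁻¹ ∈ K := by
    intro w hw
    apply key
    intro u hu z hz
    have hwz : w * z = z * w := by
      rw [hZy] at hw hz
      obtain ⟨i, rfl⟩ := hw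
      obtain ⟨j, rfl⟩ := hz
      exact (Commute.zpow_zpow (Commute.refl y) i j)
    have hid : w * ⁅u, z⁆ * w⁻¹ = ⁅w * u * w⁻¹, w * z * w⁻¹⁆ :=
      conjugate_commutatorElement u z w
    have hz' : w * z * w⁻¹ = z := by rw [hwz]; group
    rw [hid, hz']
    exact Subgroup.commutator_mem_commutator (hPn.conj_mem u hu w) hz
  rw [← Subgroup.normalizer_eq_top_iff, eq_top_iff, ← htop, sup_le_iff]
  constructor
  · intro x hx
    rw [Subgroup.mem_normalizer_iff]
    intro h
    constructor
    · intro hh; exact hmemP x hx h hh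
    · intro hh
      have := hmemP x⁻¹ (P.inv_mem hx) _ hh
      simpa [mul_assoc] using this
  · intro w hw
    rw [Subgroup.mem_normalizer_iff]
    intro h
    constructor
    · intro hh; exact hmemZ w hw h hh
    · intro hh
      have := hmemZ w⁻¹ (Zy.inv_mem hw) _ hh
      simpa [mul_assoc] using this

private lemma commutator_zpowers_eq {S : Type u} [Group S] [Finite S] (hS : IsSchmidtGroup S)
    {P : Subgroup S} (hPn : P.Normal) {y : S}
    (hy : Nat.Coprime (orderOf y) (Nat.card ↥P))
    (htop : P ⊔ Subgroup.zpowers y = ⊤)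
    (hw : ∃ x ∈ P, ¬ Commute x y) :
    (⁅P, Subgroup.zpowers y⁆ : Subgroup S) = P := by
  haveI := hPn
  set Zy := Subgroup.zpowers y with hZy
  set K := (⁅P, Zy⁆ : Subgroup S) with hKdef
  have hKP : K ≤ P := Subgroup.commutator_le_left P Zy
  by_contra hne
  have hKnorm : K.Normal := commutator_with_zpowers_normal hPn htop
  have hcomm := commute_of_proper hS hy hKP hKnorm hne
  obtain ⟨x, hx, hncx⟩ := hw
  apply hncx
  set c := ⁅x, y⁆ with hc
  have hcK : c ∈ K := Subgroup.commutator_mem_commutator hx (Subgroup.mem_zpowers y)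
  have hcy : Commute c y := hcomm c hcK
  have claim : ∀ m : ℕ, x * y ^ m * x⁻¹ * (y ^ m)⁻¹ = c ^ m := by
    intro m
    induction m with
    | zero => simp
    | succ m ihm =>
      have key : x * y ^ (m + 1) * x⁻¹ * (y ^ (m + 1))⁻¹
          = (x * y ^ m * x⁻¹ * (y ^ m)⁻¹) * (y ^ m * c * (y ^ m)⁻¹) := by
        simp only [hc, commutatorElement_def, pow_succ]
        group
      have hyc : y ^ m * c * (y ^ m)⁻¹ = c := by
        rw [← (hcy.pow_right m).eq]
        group
      rw [key, ihm, hyc, pow_succ]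
  have hcn : c ^ orderOf y = 1 := by
    rw [← claim, pow_orderOf_eq_one]
    group
  have h1 : orderOf c ∣ orderOf y := orderOf_dvd_of_pow_eq_one hcn
  have h2 : orderOf c ∣ Nat.card ↥P := P.orderOf_dvd_natCard (hKP hcK)
  have : orderOf c ∣ Nat.gcd (orderOf y) (Nat.card ↥P) := Nat.dvd_gcd h1 h2
  rw [hy] at this
  have hc1 : c = 1 := orderOf_eq_one_iff.mp (Nat.dvd_one.mp this)
  rw [← commutatorElement_eq_one_iff_commute, ← hc]
  exact hc1

private lemma map_subtype_normal_of_char {S : Type u} [Group S] {P : Subgroup S}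
    (hPn : P.Normal) (K : Subgroup ↥P) [hKc : K.Characteristic] :
    (K.map P.subtype).Normal := by
  haveI := hPn
  constructor
  intro n hn g
  obtain ⟨k, hk, rfl⟩ := hn
  have hmap : K.map (MulAut.conjNormal g : MulAut ↥P).toMonoidHom = K :=
    Subgroup.characteristic_iff_map_eq.mp hKc _
  have hk2 : (MulAut.conjNormal g : MulAut ↥P) k ∈ K := by
    rw [← hmap]
    exact Subgroup.mem_map_of_mem _ hk
  refine ⟨(MulAut.conjNormal g : MulAut ↥P) k, hk2, ?_⟩
  rw [Subgroup.coe_subtype] at *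
  rw [MulAut.conjNormal_apply]

private lemma commutator_le_frattini_of_nilpotent {G : Type u} [Group G] [Finite G]
    (hG : Group.IsNilpotent G) : commutator G ≤ frattini G := by
  refine le_iInf fun M => le_iInf fun hM => ?_
  haveI hMn : M.Normal := Subgroup.NormalizerCondition.normal_of_coatom M
    (normalizerCondition_of_isNilpotent) hM
  set f := QuotientGroup.mk' M with hf
  have hcomm : ∀ a b : G ⧸ M, a * b = b * a := by
    intro a b
    rcases eq_or_ne a 1 with rfl | ha
    · simp
    · have hlt : M < Subgroup.comap f (Subgroup.zpowers a) := by
        refine lt_of_le_of_ne ?_ ?_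
        · intro m hm
          have h1 : f m = 1 := (QuotientGroup.eq_one_iff m).mpr hm
          rw [Subgroup.mem_comap, h1]
          exact Subgroup.one_mem _
        · intro heq
          obtain ⟨g, hg⟩ := QuotientGroup.mk'_surjective M a
          have hgmem : g ∈ Subgroup.comap f (Subgroup.zpowers a) := by
            rw [Subgroup.mem_comap, hf, hg]; exact Subgroup.mem_zpowers a
          rw [← heq] at hgmem
          exact ha (by rw [← hg]; exact (QuotientGroup.eq_one_iff g).mpr hgmem)
      have htop := hM.2 _ hlt
      have hz : Subgroup.zpowers a = ⊤ := by
        have := congrArg (Subgroup.map f) htop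
        rwa [Subgroup.map_comap_eq_self_of_surjective (QuotientGroup.mk'_surjective M),
          Subgroup.map_top_of_surjective f (QuotientGroup.mk'_surjective M)] at this
      have hb : b ∈ Subgroup.zpowers a := hz ▸ Subgroup.mem_top b
      obtain ⟨j, rfl⟩ := hb
      exact ((Commute.refl a).zpow_right j).eq
  letI : CommGroup (G ⧸ M) := { (inferInstance : Group (G ⧸ M)) with mul_comm := hcomm }
  have := Abelianization.commutator_subset_ker f
  rwa [QuotientGroup.ker_mk'] at this

private lemma mem_commutator_of_commute {S : Type u} [Group S] [Finite S]
    {P : Subgroup S} (hPn : P.Normal) {y : S}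
    (hy : Nat.Coprime (orderOf y) (Nat.card ↥P))
    (hKeq : (⁅P, Subgroup.zpowers y⁆ : Subgroup S) = P)
    {c : ↥P} (hc : Commute (c : S) y) :
    c ∈ commutator ↥P := by
  haveI := hPn
  set n := orderOf y with hn
  have hnpos : 0 < n := orderOf_pos y
  set A := Abelianization ↥P with hA
  set F : ℕ → (A →* A) :=
    fun k => Abelianization.map (MulAut.conjNormal (y ^ k) : MulAut ↥P).toMonoidHom with hF
  have F_of : ∀ (k : ℕ) (x : ↥P),
      F k (Abelianization.of x) = Abelianization.of ((MulAut.conjNormal (y ^ k) : MulAut ↥P) x) :=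
    fun k x => Abelianization.map_of _ _
  have hFcomp : ∀ (k : ℕ) (a : A), F k (F 1 a) = F (k + 1) a := by
    intro k a
    induction a using QuotientGroup.induction_on with
    | H x =>
      have h0 : (Abelianization.of x : A) = QuotientGroup.mk x := rfl
      rw [← h0, F_of, F_of, F_of]
      congr 1
      have : (MulAut.conjNormal (y ^ (k + 1)) : MulAut ↥P)
          = (MulAut.conjNormal (y ^ k) : MulAut ↥P) * (MulAut.conjNormal (y ^ 1) : MulAut ↥P) := by
        rw [← map_mul, ← pow_add]
      rw [this]
      rfl
  have Fid : ∀ (k : ℕ), y ^ k = 1 → ∀ a : A, F k a = a := by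
    intro k hk a
    induction a using QuotientGroup.induction_on with
    | H x =>
      have h0 : (Abelianization.of x : A) = QuotientGroup.mk x := rfl
      rw [← h0, F_of, hk]
      congr 1
      rw [map_one]
      rfl
  set τ : A →* A := ∏ k ∈ Finset.range n, F k with hτ
  have τ_apply : ∀ a : A, τ a = ∏ k ∈ Finset.range n, F k a := by
    intro a
    rw [hτ, MonoidHom.finset_prod_apply]
  have τ_F1 : ∀ a : A, τ (F 1 a) = τ a := by
    intro a
    rw [τ_apply, τ_apply]
    have h1 : ∀ k ∈ Finset.range n, F k (F 1 a) = F (k + 1) a := fun k _ => hFcomp k a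
    rw [Finset.prod_congr rfl h1]
    have key := (Finset.prod_range_succ' (fun k => F k a) n).symm.trans
      (Finset.prod_range_succ (fun k => F k a) n)
    have h4 : F 0 a = a := Fid 0 (pow_zero y) a
    have h5 : F n a = a := Fid n (pow_orderOf_eq_one y) a
    rw [h4, h5] at key
    exact mul_right_cancel key
  have τ_Fk : ∀ (k : ℕ) (a : A), τ (F k a) = τ a := by
    intro k
    induction k with
    | zero => intro a; rw [Fid 0 (pow_zero y) a]
    | succ k ih =>
      intro a
      rw [← hFcomp k a, ih (F 1 a), τ_F1 a]
  -- τ vanishes on all of A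
  have τ_triv : ∀ x : ↥P, τ (Abelianization.of x) = 1 := by
    have hcl : Subgroup.closure {s : S | ∃ g₁ ∈ P, ∃ g₂ ∈ Subgroup.zpowers y, ⁅g₁, g₂⁆ = s}
        = P := by
      have := Subgroup.commutator_def P (Subgroup.zpowers y)
      rw [← this]
      exact hKeq
    have main : ∀ s, s ∈ Subgroup.closure
        {s : S | ∃ g₁ ∈ P, ∃ g₂ ∈ Subgroup.zpowers y, ⁅g₁, g₂⁆ = s} →
        ∀ hsP : s ∈ P, τ (Abelianization.of ⟨s, hsP⟩) = 1 := by
      intro s hs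
      induction hs using Subgroup.closure_induction with
      | mem t ht =>
        obtain ⟨u, hu, z, hz, rfl⟩ := ht
        obtain ⟨m, rfl⟩ := hz
        intro hsP
        set k : ℕ := (m % (n : ℤ)).toNat with hk
        have hzk : y ^ (m : ℤ) = y ^ k := by
          rw [hk]
          have h1 : ((m % (n : ℤ)).toNat : ℤ) = m % (n : ℤ) :=
            Int.toNat_of_nonneg (Int.emod_nonneg m (by exact_mod_cast hnpos.ne'))
          rw [← zpow_natCast, h1, hn, zpow_mod_orderOf]
        have hsplit : (⟨⁅u, y ^ (m : ℤ)⁆, hsP⟩ : ↥P)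
            = ⟨u, hu⟩ * (MulAut.conjNormal (y ^ k) : MulAut ↥P) (⟨u, hu⟩)⁻¹ := by
          apply Subtype.ext
          push_cast [MulAut.conjNormal_apply]
          rw [hzk, commutatorElement_def]
          group
        rw [hsplit, map_mul, map_mul, ← F_of k, τ_Fk k, map_inv, map_inv, mul_inv_cancel]
      | one =>
        intro h
        have h1 : (⟨1, h⟩ : ↥P) = 1 := rfl
        rw [h1, map_one, map_one]
      | mul a b ha hb iha ihb =>
        intro h
        have haP : a ∈ P := hcl ▸ ha
        have hbP : b ∈ P := hcl ▸ hb
        have h1 : (⟨a * b, h⟩ : ↥P) = ⟨a, haP⟩ * ⟨b, hbP⟩ := rfl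
        rw [h1, map_mul, map_mul, iha haP, ihb hbP, one_mul]
      | inv a ha iha =>
        intro h
        have haP : a ∈ P := hcl ▸ ha
        have h1 : (⟨a⁻¹, h⟩ : ↥P) = (⟨a, haP⟩)⁻¹ := rfl
        rw [h1, map_inv, map_inv, iha haP, inv_one]
    intro x
    have := main (x : S) (by rw [hcl]; exact x.2) x.2
    simpa using this
  -- the element c is fixed by F 1
  have hfix : (MulAut.conjNormal y : MulAut ↥P) c = c := by
    apply Subtype.ext
    rw [MulAut.conjNormal_apply]
    rw [← hc.eq]
    group
  have hfix1 : F 1 (Abelianization.of c) = Abelianization.of c := by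
    rw [F_of, pow_one, hfix]
  have hfixk : ∀ k : ℕ, F k (Abelianization.of c) = Abelianization.of c := by
    intro k
    induction k with
    | zero => exact Fid 0 (pow_zero y) _
    | succ k ih => rw [← hFcomp, hfix1, ih]
  have hτc : τ (Abelianization.of c) = (Abelianization.of c) ^ n := by
    rw [τ_apply]
    rw [Finset.prod_congr rfl fun k _ => hfixk k]
    rw [Finset.prod_const, Finset.card_range]
  have hpow : (Abelianization.of c) ^ n = 1 := by
    rw [← hτc, τ_triv c]
  have h1 : orderOf (Abelianization.of c) ∣ n := orderOf_dvd_of_pow_eq_one hpow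
  have h2 : orderOf (Abelianization.of c) ∣ Nat.card ↥P := by
    refine (orderOf_dvd_natCard _).trans ?_
    rw [Subgroup.card_eq_card_quotient_mul_card_subgroup (commutator ↥P)]
    exact Dvd.intro _ rfl
  have h3 : orderOf (Abelianization.of c) ∣ Nat.gcd n (Nat.card ↥P) := Nat.dvd_gcd h1 h2
  rw [hy] at h3
  have h4 : Abelianization.of c = 1 := orderOf_eq_one_iff.mp (Nat.dvd_one.mp h3)
  exact (QuotientGroup.eq_one_iff c).mp h4

/-- Lemma 1(4): if the normal Sylow `p`-subgroup `P` of a Schmidt group is nonabelian, then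
`Z(P) = P' = Φ(P)`. -/
theorem stmt_17 (S : Type*) [Group S] [Finite S] (hS : IsSchmidtGroup S)
    (p : ℕ) (hp : p.Prime) (P : Sylow p S) (hPn : (P : Subgroup S).Normal)
    (hnab : ¬ ∀ a b : ↥(P : Subgroup S), a * b = b * a) :
    Subgroup.center ↥(P : Subgroup S) = commutator ↥(P : Subgroup S) ∧
      commutator ↥(P : Subgroup S) = frattini ↥(P : Subgroup S) := by
  haveI := hPn
  haveI : Fact p.Prime := ⟨hp⟩
  obtain ⟨y, hy, htop, hw⟩ := exists_good_element hS hp P hPn hnab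
  set Pb := (P : Subgroup S) with hPb
  have hKeq : (⁅Pb, Subgroup.zpowers y⁆ : Subgroup S) = Pb :=
    commutator_zpowers_eq hS hPn hy htop hw
  have hnontriv : Nontrivial ↥Pb := by
    by_contra h
    rw [not_nontrivial_iff_subsingleton] at h
    exact hnab fun a b => Subsingleton.elim _ _
  have hmap_top : (⊤ : Subgroup ↥Pb).map Pb.subtype = Pb := by
    rw [← MonoidHom.range_eq_map, Subgroup.range_subtype]
  -- the Frattini subgroup is proper
  have hfr_ne_top : frattini ↥Pb ≠ ⊤ := by
    haveI : Nontrivial (Subgroup ↥Pb) := ⟨⊥, ⊤, by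
      intro h
      obtain ⟨x, hx⟩ := exists_ne (1 : ↥Pb)
      have : x ∈ (⊥ : Subgroup ↥Pb) := h ▸ Subgroup.mem_top x
      exact hx (Subgroup.mem_bot.mp this)⟩
    obtain ⟨M, hM⟩ : ∃ M : Subgroup ↥Pb, IsCoatom M := IsCoatomic.exists_coatom _
    intro h
    have h1 : frattini ↥Pb ≤ M := frattini_le_coatom hM
    rw [h] at h1
    exact hM.1 (top_le_iff.mp h1)
  set ΦS := (frattini ↥Pb).map Pb.subtype with hΦS
  have hΦnorm : ΦS.Normal := map_subtype_normal_of_char hPn _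
  have hΦle : ΦS ≤ Pb := Subgroup.map_subtype_le _
  have hΦne : ΦS ≠ Pb := by
    intro h
    exact hfr_ne_top (Subgroup.map_injective Pb.subtype_injective (h.trans hmap_top.symm))
  have hΦcomm : ∀ a ∈ ΦS, Commute a y := commute_of_proper hS hy hΦle hΦnorm hΦne
  -- Frattini is central (three subgroups lemma)
  have hfr_le_center : frattini ↥Pb ≤ Subgroup.center ↥Pb := by
    have hAZ : (⁅ΦS, Subgroup.zpowers y⁆ : Subgroup S) = ⊥ := by
      rw [Subgroup.commutator_eq_bot_iff_le_centralizer]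
      intro a ha
      rw [Subgroup.mem_centralizer_iff]
      intro z hz
      obtain ⟨m, rfl⟩ := hz
      exact (((hΦcomm a ha).zpow_right m).symm).eq
    have h1 : (⁅⁅Pb, ΦS⁆, Subgroup.zpowers y⁆ : Subgroup S) = ⊥ := by
      apply le_bot_iff.mp
      have := Subgroup.commutator_mono (Subgroup.commutator_le_right Pb ΦS)
        (le_refl (Subgroup.zpowers y))
      rw [hAZ] at this
      exact this
    have h2 : (⁅⁅ΦS, Subgroup.zpowers y⁆, Pb⁆ : Subgroup S) = ⊥ := by
      rw [hAZ, Subgroup.commutator_bot_left]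
    have h3 := Subgroup.commutator_commutator_eq_bot_of_rotate h1 h2
    rw [Subgroup.commutator_comm (Subgroup.zpowers y) Pb, hKeq] at h3
    have hPcent : Pb ≤ Subgroup.centralizer (ΦS : Set S) :=
      Subgroup.commutator_eq_bot_iff_le_centralizer.mp h3
    intro c hcfr
    rw [Subgroup.mem_center_iff]
    intro g
    have hc' : (c : S) ∈ ΦS := Subgroup.mem_map_of_mem _ hcfr
    have hcomm := Subgroup.mem_centralizer_iff.mp (hPcent g.2) _ hc'
    exact Subtype.ext hcomm.symm
  -- the center is contained in the commutator subgroup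
  have hZle : Subgroup.center ↥Pb ≤ commutator ↥Pb := by
    intro c hcZ
    set ZS := (Subgroup.center ↥Pb).map Pb.subtype with hZS
    have hZnorm : ZS.Normal := map_subtype_normal_of_char hPn _
    have hZle' : ZS ≤ Pb := Subgroup.map_subtype_le _
    have hZne : ZS ≠ Pb := by
      intro h
      apply hnab
      intro a b
      have hcent : Subgroup.center ↥Pb = ⊤ :=
        Subgroup.map_injective Pb.subtype_injective (h.trans hmap_top.symm)
      have ha : a ∈ Subgroup.center ↥Pb := hcent ▸ Subgroup.mem_top a
      exact (Subgroup.mem_center_iff.mp ha b).symm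
    have hcy : Commute (c : S) y :=
      commute_of_proper hS hy hZle' hZnorm hZne _ (Subgroup.mem_map_of_mem _ hcZ)
    exact mem_commutator_of_commute hPn hy hKeq hcy
  have hcf : commutator ↥Pb ≤ frattini ↥Pb :=
    commutator_le_frattini_of_nilpotent (P.isPGroup'.isNilpotent)
  exact ⟨le_antisymm hZle (hcf.trans hfr_le_center),
    le_antisymm hcf (hfr_le_center.trans hZle)⟩
end
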